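/- Let (c_n)_{n≥1} be a sequence of complex numbers such that Σ_{n=1}^∞ n^ε·|c_n| < ∞ for some ε > 0, and define b_n = Σ_{k=1}^∞ c_{k·n} for each n ≥ 1. Then for every n ≥ 1 the series Σ_{k=1}^∞ μ(k)·b_{k·n} converges and c_n = Σ_{k=1}^∞ μ(k)·b_{k·n}. -/

import Mathlib

open Filter ArithmeticFunction

/-- Growth bound: `2 ^ ω(r) ≤ C · r ^ ε`. -/
lemma aux_two_pow_card_primeFactors_le {ε : ℝ} (hε : 0 < ε) :
    ∃ C : ℝ, 1 ≤ C ∧ ∀ r : ℕ, 1 ≤ r →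
      (2 : ℝ) ^ r.primeFactors.card ≤ C * (r : ℝ) ^ ε := by
  set P : ℕ := ⌈(2 : ℝ) ^ (1 / ε)⌉₊ with hPdef
  refine ⟨2 ^ P, one_le_pow₀ one_le_two, fun r hr => ?_⟩
  have hr0 : (0 : ℝ) < r := by exact_mod_cast hr
  classical
  have hsplit : (2 : ℝ) ^ r.primeFactors.card
      = (∏ p ∈ r.primeFactors with p ≤ P, (2 : ℝ))
        * ∏ p ∈ r.primeFactors with ¬ p ≤ P, (2 : ℝ) := by
    rw [Finset.prod_filter_mul_prod_filter_not, Finset.prod_const]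
  rw [hsplit]
  have hS : (∏ p ∈ r.primeFactors with p ≤ P, (2 : ℝ)) ≤ 2 ^ P := by
    rw [Finset.prod_const]
    apply pow_le_pow_right₀ one_le_two
    have hsub : {p ∈ r.primeFactors | p ≤ P} ⊆ Finset.Icc 1 P := by
      intro p hp
      rw [Finset.mem_filter] at hp
      exact Finset.mem_Icc.mpr ⟨(Nat.prime_of_mem_primeFactors hp.1).one_lt.le.trans'
        (by norm_num), hp.2⟩
    simpa using Finset.card_le_card hsub
  have hL : (∏ p ∈ r.primeFactors with ¬ p ≤ P, (2 : ℝ)) ≤ (r : ℝ) ^ ε := by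
    have h1 : (∏ p ∈ r.primeFactors with ¬ p ≤ P, (2 : ℝ))
        ≤ ∏ p ∈ r.primeFactors with ¬ p ≤ P, (p : ℝ) ^ ε := by
      apply Finset.prod_le_prod (fun _ _ => by norm_num)
      intro p hp
      rw [Finset.mem_filter, not_le] at hp
      have hpP : (2 : ℝ) ^ (1 / ε) ≤ (p : ℝ) := by
        calc (2 : ℝ) ^ (1 / ε) ≤ (P : ℝ) := Nat.le_ceil _
        _ ≤ (p : ℝ) := by exact_mod_cast hp.2.le
      calc (2 : ℝ) = ((2 : ℝ) ^ (1 / ε)) ^ ε := by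
            rw [← Real.rpow_mul (by norm_num : (0:ℝ) ≤ 2), one_div,
              inv_mul_cancel₀ hε.ne', Real.rpow_one]
        _ ≤ (p : ℝ) ^ ε := Real.rpow_le_rpow (Real.rpow_nonneg (by norm_num) _) hpP hε.le
    have h2 : (∏ p ∈ r.primeFactors with ¬ p ≤ P, (p : ℝ) ^ ε)
        = ((∏ p ∈ r.primeFactors with ¬ p ≤ P, p : ℕ) : ℝ) ^ ε := by
      rw [Real.finset_prod_rpow _ _ (fun p _ => by positivity) ε]
      push_cast
      rfl
    have h3 : (∏ p ∈ r.primeFactors with ¬ p ≤ P, p) ∣ r :=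
      dvd_trans (Finset.prod_dvd_prod_of_subset _ _ _ (Finset.filter_subset _ _))
        (Nat.prod_primeFactors_dvd r)
    have h4 : ((∏ p ∈ r.primeFactors with ¬ p ≤ P, p : ℕ) : ℝ) ≤ (r : ℝ) := by
      exact_mod_cast Nat.le_of_dvd hr h3
    calc (∏ p ∈ r.primeFactors with ¬ p ≤ P, (2 : ℝ))
        ≤ ((∏ p ∈ r.primeFactors with ¬ p ≤ P, p : ℕ) : ℝ) ^ ε := h2 ▸ h1
      _ ≤ (r : ℝ) ^ ε := Real.rpow_le_rpow (by positivity) h4 hε.le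
  calc (∏ p ∈ r.primeFactors with p ≤ P, (2 : ℝ))
        * ∏ p ∈ r.primeFactors with ¬ p ≤ P, (2 : ℝ)
      ≤ 2 ^ P * (r : ℝ) ^ ε := by
        apply mul_le_mul hS hL (Finset.prod_nonneg fun _ _ => by norm_num) (by positivity)

/-- The number of squarefree divisors is at most `2 ^ ω(m)`. -/
lemma aux_card_squarefree_divisors (m : ℕ) :
    ({d ∈ m.divisors | Squarefree d}).card ≤ 2 ^ m.primeFactors.card := by
  classical
  rcases eq_or_ne m 0 with rfl | hm
  · simp
  calc ({d ∈ m.divisors | Squarefree d}).card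
      ≤ m.primeFactors.powerset.card := by
        apply Finset.card_le_card_of_injOn (fun d => d.primeFactors)
        · intro d hd
          rw [Finset.mem_coe, Finset.mem_filter, Nat.mem_divisors] at hd
          exact Finset.mem_powerset.mpr (Nat.primeFactors_mono hd.1.1 hm)
        · intro d₁ h₁ d₂ h₂ h
          rw [Finset.mem_coe, Finset.mem_filter] at h₁ h₂
          simp only at h
          rw [← Nat.prod_primeFactors_of_squarefree h₁.2,
            ← Nat.prod_primeFactors_of_squarefree h₂.2, h]
    _ = 2 ^ m.primeFactors.card := by rw [Finset.card_powerset]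

lemma aux_abs_sum_moebius_le (m N : ℕ) (hm : m ≠ 0) :
    |∑ k ∈ Finset.Icc 1 N with k ∣ m, moebius k| ≤ (2 : ℤ) ^ m.primeFactors.card := by
  classical
  calc |∑ k ∈ Finset.Icc 1 N with k ∣ m, moebius k|
      ≤ ∑ k ∈ Finset.Icc 1 N with k ∣ m, |moebius k| := Finset.abs_sum_le_sum_abs _ _
    _ ≤ ∑ k ∈ m.divisors, |moebius k| := by
        apply Finset.sum_le_sum_of_subset_of_nonneg
        · intro k hk
          rw [Finset.mem_filter, Finset.mem_Icc] at hk
          exact Nat.mem_divisors.mpr ⟨hk.2, hm⟩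
        · intro _ _ _; exact abs_nonneg _
    _ = ∑ k ∈ m.divisors, (if Squarefree k then 1 else 0) := by
        apply Finset.sum_congr rfl
        intro k _
        by_cases hk : Squarefree k
        · rw [if_pos hk, abs_moebius_eq_one_of_squarefree hk]
        · rw [if_neg hk, moebius_eq_zero_of_not_squarefree hk, abs_zero]
    _ = (({d ∈ m.divisors | Squarefree d}).card : ℤ) := by
        simp [Finset.sum_boole]
    _ ≤ (2 : ℤ) ^ m.primeFactors.card := by
        exact_mod_cast aux_card_squarefree_divisors m

/-- **Möbius inversion under a polynomial-weight condition.**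
If `(cₙ)` satisfies `∑ n^ε·|cₙ| < ∞` for some `ε > 0`, and `bₙ = ∑_{k=1}^∞ c_{k·n}`,
then for every `n ≥ 1` the series `∑_{k=1}^∞ μ(k)·b_{k·n}` converges and equals `cₙ`. -/
theorem moebius_inversion_of_summable_rpow
    (c b : ℕ → ℂ)
    (hc : ∃ ε : ℝ, 0 < ε ∧ Summable fun n : ℕ => (n : ℝ) ^ ε * ‖c n‖)
    (hb : ∀ n : ℕ, 1 ≤ n → HasSum (fun k : ℕ => c ((k + 1) * n)) (b n)) :
    ∀ n : ℕ, 1 ≤ n →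
      Tendsto (fun N : ℕ => ∑ k ∈ Finset.Icc 1 N, (moebius k : ℂ) * b (k * n))
        atTop (nhds (c n)) := by
  classical
  obtain ⟨ε, hε, hsum⟩ := hc
  intro n hn
  obtain ⟨C, hC1, hCb⟩ := aux_two_pow_card_primeFactors_le hε
  have hn0 : 0 < n := hn
  -- indicator version of the inner sums
  set g : ℕ → ℕ → ℂ := fun k m => if k ∣ (m + 1) then c ((m + 1) * n) else 0 with hgdef
  have hgsum : ∀ k : ℕ, 1 ≤ k → HasSum (g k) (b (k * n)) := by
    intro k hk
    have hk0 : 0 < k := hk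
    have hkn : 1 ≤ k * n := Nat.mul_pos hk0 hn0
    have h1 := hb (k * n) hkn
    have hinj : Function.Injective (fun j : ℕ => (j + 1) * k - 1) := by
      intro a b hab
      simp only at hab
      have ha : ((a + 1) * k - 1) + 1 = (a + 1) * k :=
        Nat.succ_pred_eq_of_pos (Nat.mul_pos a.succ_pos hk0)
      have hbb : ((b + 1) * k - 1) + 1 = (b + 1) * k :=
        Nat.succ_pred_eq_of_pos (Nat.mul_pos b.succ_pos hk0)
      have : (a + 1) * k = (b + 1) * k := by rw [← ha, ← hbb, hab]
      have := Nat.eq_of_mul_eq_mul_right hk0 this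
      omega
    have hrange : ∀ x ∉ Set.range (fun j : ℕ => (j + 1) * k - 1), g k x = 0 := by
      intro x hx
      rw [hgdef]
      simp only
      rw [if_neg]
      intro ⟨q, hq⟩
      have hq0 : 0 < q := Nat.pos_of_ne_zero (by rintro rfl; simp at hq)
      refine hx ⟨q - 1, ?_⟩
      simp only
      have h1 : q - 1 + 1 = q := Nat.succ_pred_eq_of_pos hq0
      rw [h1, Nat.mul_comm q k]
      omega
    refine (hinj.hasSum_iff hrange).mp ?_
    have hcomp : (g k ∘ fun j : ℕ => (j + 1) * k - 1) = fun j => c ((j + 1) * (k * n)) := by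
      funext j
      have hj : ((j + 1) * k - 1) + 1 = (j + 1) * k :=
        Nat.succ_pred_eq_of_pos (Nat.mul_pos j.succ_pos hk0)
      simp only [hgdef, Function.comp_apply, hj, if_pos (Dvd.intro (j + 1) rfl),
        Dvd.intro_left (j+1) rfl, if_true, mul_assoc]
    rw [hcomp]
    exact h1
  -- partial sums as a tsum over m
  have key : ∀ N : ℕ, ∑ k ∈ Finset.Icc 1 N, (moebius k : ℂ) * b (k * n)
      = ∑' m : ℕ, ((∑ k ∈ Finset.Icc 1 N with k ∣ (m + 1), moebius k : ℤ) : ℂ)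
          * c ((m + 1) * n) := by
    intro N
    have h2 : HasSum (fun m => ∑ k ∈ Finset.Icc 1 N, (moebius k : ℂ) * g k m)
        (∑ k ∈ Finset.Icc 1 N, (moebius k : ℂ) * b (k * n)) :=
      hasSum_sum fun k hk => ((hgsum k (Finset.mem_Icc.mp hk).1).mul_left _)
    rw [← h2.tsum_eq]
    apply tsum_congr
    intro m
    rw [hgdef]
    simp only [mul_ite, mul_zero]
    rw [← Finset.sum_filter, ← Finset.sum_mul]
    push_cast
    rfl
  have hfun : (fun N : ℕ => ∑ k ∈ Finset.Icc 1 N, (moebius k : ℂ) * b (k * n))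
      = fun N : ℕ => ∑' m : ℕ,
        ((∑ k ∈ Finset.Icc 1 N with k ∣ (m + 1), moebius k : ℤ) : ℂ) * c ((m + 1) * n) := by
    funext N; exact key N
  rw [hfun]
  -- limit function
  have hgoal : c n = ∑' m : ℕ, (if m = 0 then c n else 0) := by
    rw [tsum_ite_eq]
  rw [hgoal]
  -- dominated convergence
  apply tendsto_tsum_of_dominated_convergence
    (bound := fun m : ℕ => C * ((((m + 1) * n : ℕ) : ℝ) ^ ε * ‖c ((m + 1) * n)‖))
  · apply Summable.mul_left
    have hinj : Function.Injective (fun m : ℕ => (m + 1) * n) := by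
      intro a b hab
      simp only at hab
      have := Nat.eq_of_mul_eq_mul_right hn0 hab
      omega
    exact (hsum.comp_injective hinj)
  · -- pointwise convergence
    intro m
    apply Tendsto.congr' (f₁ := fun _ : ℕ => if m = 0 then c n else 0)
    · rw [EventuallyEq, eventually_atTop]
      refine ⟨m + 1, fun N hN => ?_⟩
      have hset : {k ∈ Finset.Icc 1 N | k ∣ (m + 1)} = (m + 1).divisors := by
        ext k
        rw [Finset.mem_filter, Finset.mem_Icc, Nat.mem_divisors]
        constructor
        · rintro ⟨_, hd⟩; exact ⟨hd, Nat.succ_ne_zero m⟩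
        · rintro ⟨hd, _⟩
          exact ⟨⟨Nat.pos_of_dvd_of_pos hd m.succ_pos, (Nat.le_of_dvd m.succ_pos hd).trans hN⟩, hd⟩
      rw [hset]
      have hmoeb : (∑ k ∈ (m + 1).divisors, moebius k) = if m + 1 = 1 then 1 else 0 := by
        have h := coe_mul_zeta_apply (f := (moebius : ArithmeticFunction ℤ)) (x := m + 1)
        rw [moebius_mul_coe_zeta] at h
        rw [← h, one_apply]
      rw [hmoeb]
      rcases eq_or_ne m 0 with rfl | hm0
      · simp
      · rw [if_neg hm0, if_neg (show (m + 1 ≠ 1) by omega)]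
        simp
    · exact tendsto_const_nhds
  · -- bound
    filter_upwards with N
    intro m
    rw [norm_mul]
    have habs : ‖((∑ k ∈ Finset.Icc 1 N with k ∣ (m + 1), moebius k : ℤ) : ℂ)‖
        ≤ (2 : ℝ) ^ (m + 1).primeFactors.card := by
      rw [Complex.norm_intCast]
      have := aux_abs_sum_moebius_le (m + 1) N (Nat.succ_ne_zero m)
      calc |((∑ k ∈ Finset.Icc 1 N with k ∣ (m + 1), moebius k : ℤ) : ℝ)|
          = ((|∑ k ∈ Finset.Icc 1 N with k ∣ (m + 1), moebius k| : ℤ) : ℝ) := by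
            push_cast; rfl
        _ ≤ (((2 : ℤ) ^ (m + 1).primeFactors.card : ℤ) : ℝ) := by exact_mod_cast this
        _ = (2 : ℝ) ^ (m + 1).primeFactors.card := by push_cast; rfl
    have h2C : (2 : ℝ) ^ (m + 1).primeFactors.card ≤ C * (((m + 1) * n : ℕ) : ℝ) ^ ε := by
      calc (2 : ℝ) ^ (m + 1).primeFactors.card
          ≤ C * ((m + 1 : ℕ) : ℝ) ^ ε := hCb (m + 1) m.succ_pos
        _ ≤ C * (((m + 1) * n : ℕ) : ℝ) ^ ε := by
            apply mul_le_mul_of_nonneg_left _ (zero_le_one.trans hC1)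
            apply Real.rpow_le_rpow (by positivity) _ hε.le
            exact_mod_cast Nat.le_mul_of_pos_right (m + 1) hn0
    calc ‖((∑ k ∈ Finset.Icc 1 N with k ∣ (m + 1), moebius k : ℤ) : ℂ)‖ * ‖c ((m + 1) * n)‖
        ≤ (C * (((m + 1) * n : ℕ) : ℝ) ^ ε) * ‖c ((m + 1) * n)‖ := by
          apply mul_le_mul_of_nonneg_right (habs.trans h2C) (norm_nonneg _)
      _ = C * ((((m + 1) * n : ℕ) : ℝ) ^ ε * ‖c ((m + 1) * n)‖) := by
          ring
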